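/- Let y: [0, ∞) → [0, ∞) be continuous, K: [0, ∞) → [0, ∞) locally integrable, and M a continuous real martingale with M_0 = 0, such that almost surely y_t ≤ M_t + ∫_0^t K_s y_s ds for all t. If y is nonnegative and adapted, then almost surely y_t = 0 for all t ≥ 0. -/

import Mathlib

open MeasureTheory Filter Set

open scoped Classical Topology

namespace StochasticGronwallAux

variable {Ω : Type*} {m0 : MeasurableSpace Ω}

/-! ### Hitting events -/

def hitSet (f : ℝ → Ω → ℝ) (a t : ℝ) : Set Ω := {ω | ∃ s, 0 ≤ s ∧ s ≤ t ∧ a ≤ f s ω}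

lemma mem_hitSet_iff {f : ℝ → Ω → ℝ} (hf : ∀ ω, Continuous fun s => f s ω)
    {a t : ℝ} (ht : 0 ≤ t) (ω : Ω) :
    ω ∈ hitSet f a t ↔ ∀ m : ℕ, ∃ q : ℚ, 0 ≤ (q : ℝ) ∧ (q : ℝ) ≤ t ∧
      a - 1/(m+1) < f q ω := by
  constructor
  · rintro ⟨s, hs0, hst, hsa⟩ m
    have hpos : (0:ℝ) < 1/(m+1) := by positivity
    have hopen : IsOpen {x : ℝ | a - 1/(m+1) < f x ω} :=
      isOpen_lt continuous_const (hf ω)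
    have hmem : s ∈ {x : ℝ | a - 1/(m+1) < f x ω} := by
      simp only [mem_setOf_eq]; linarith
    obtain ⟨δ, hδ, hball⟩ := Metric.isOpen_iff.mp hopen s hmem
    rw [Real.ball_eq_Ioo] at hball
    rcases lt_or_eq_of_le hst with hlt | rfl
    · obtain ⟨q, hq1, hq2⟩ := exists_rat_btwn (lt_min hlt (lt_add_of_pos_right s hδ))
      rw [lt_min_iff] at hq2
      refine ⟨q, le_trans hs0 hq1.le, hq2.1.le, hball ⟨by linarith, hq2.2⟩⟩
    · rcases eq_or_lt_of_le hs0 with rfl | h0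
      · refine ⟨0, by norm_num, by norm_num, ?_⟩
        simpa using hmem
      · obtain ⟨q, hq1, hq2⟩ := exists_rat_btwn (max_lt (sub_lt_self s hδ) h0)
        rw [max_lt_iff] at hq1
        refine ⟨q, hq1.2.le, hq2.le, hball ⟨hq1.1, by linarith⟩⟩
  · intro h
    obtain ⟨sm, hsm, hmax⟩ := isCompact_Icc.exists_isMaxOn (nonempty_Icc.mpr ht)
      ((hf ω).continuousOn : ContinuousOn (fun s => f s ω) (Icc 0 t))
    refine ⟨sm, hsm.1, hsm.2, ?_⟩
    by_contra hca
    push_neg at hca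
    obtain ⟨m, hm⟩ := exists_nat_one_div_lt (sub_pos.mpr hca)
    obtain ⟨q, hq0, hqt, hq⟩ := h m
    have hle : f q ω ≤ f sm ω := hmax (⟨hq0, hqt⟩ : (q:ℝ) ∈ Icc 0 t)
    linarith

lemma measurableSet_hitSet {ℱ : Filtration ℝ m0} {f : ℝ → Ω → ℝ} (had : Adapted ℱ f)
    (hf : ∀ ω, Continuous fun s => f s ω) {a t : ℝ} (ht : 0 ≤ t) :
    MeasurableSet[ℱ t] (hitSet f a t) := by
  have heq : hitSet f a t = ⋂ m : ℕ, ⋃ q : ℚ, ⋃ (_ : 0 ≤ (q:ℝ) ∧ (q:ℝ) ≤ t),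
      {ω | a - 1/(m+1) < f q ω} := by
    ext ω
    simp only [mem_iInter, mem_iUnion, mem_setOf_eq]
    rw [mem_hitSet_iff hf ht]
    constructor
    · intro h m; obtain ⟨q, h1, h2, h3⟩ := h m; exact ⟨q, ⟨h1, h2⟩, h3⟩
    · intro h m; obtain ⟨q, ⟨h1, h2⟩, h3⟩ := h m; exact ⟨q, h1, h2, h3⟩
  rw [heq]
  refine MeasurableSet.iInter fun m => MeasurableSet.iUnion fun q =>
    MeasurableSet.iUnion fun hq => ?_
  exact measurableSet_lt measurable_const ((had q).mono (ℱ.mono hq.2) le_rfl)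

/-! ### Exit events -/

def exitSet (M : ℝ → Ω → ℝ) (a b t : ℝ) : Set Ω :=
  hitSet M a t ∪ hitSet (fun s ω => -M s ω) b t

lemma mem_exitSet_iff {M : ℝ → Ω → ℝ} {a b t : ℝ} (ω : Ω) :
    ω ∈ exitSet M a b t ↔ ∃ s, 0 ≤ s ∧ s ≤ t ∧ (a ≤ M s ω ∨ M s ω ≤ -b) := by
  simp only [exitSet, mem_union, hitSet, mem_setOf_eq]
  constructor
  · rintro (⟨s, h1, h2, h3⟩ | ⟨s, h1, h2, h3⟩)
    · exact ⟨s, h1, h2, Or.inl h3⟩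
    · exact ⟨s, h1, h2, Or.inr (by linarith)⟩
  · rintro ⟨s, h1, h2, h3 | h3⟩
    · exact Or.inl ⟨s, h1, h2, h3⟩
    · exact Or.inr ⟨s, h1, h2, by linarith⟩

lemma measurableSet_exitSet {ℱ : Filtration ℝ m0} {M : ℝ → Ω → ℝ} (had : Adapted ℱ M)
    (hM : ∀ ω, Continuous fun s => M s ω) {a b t : ℝ} (ht : 0 ≤ t) :
    MeasurableSet[ℱ t] (exitSet M a b t) :=
  (measurableSet_hitSet had hM ht).union
    (measurableSet_hitSet (fun s => (had s).neg) (fun ω => (hM ω).neg) ht)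

/-! ### Dyadic grid -/

noncomputable def grid (u : ℝ) (n k : ℕ) : ℝ := k * u / 2 ^ n

lemma grid_nonneg {u : ℝ} (hu : 0 ≤ u) (n k : ℕ) : 0 ≤ grid u n k := by
  unfold grid; positivity

lemma grid_mono {u : ℝ} (hu : 0 ≤ u) (n : ℕ) {k l : ℕ} (h : k ≤ l) :
    grid u n k ≤ grid u n l := by
  unfold grid
  gcongr


lemma grid_le {u : ℝ} (hu : 0 ≤ u) {n k : ℕ} (h : k ≤ 2 ^ n) : grid u n k ≤ u := by
  unfold grid
  rw [div_le_iff₀ (by positivity)]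
  have h2 : (k:ℝ) ≤ 2^n := by exact_mod_cast h
  nlinarith

lemma grid_succ (u : ℝ) (n k : ℕ) : grid u (n+1) (2*k) = grid u n k := by
  unfold grid
  push_cast
  field_simp
  ring

lemma exists_grid {u x : ℝ} (hu : 0 < u) (hx0 : 0 ≤ x) (hxu : x ≤ u) (n : ℕ) :
    ∃ k, k ≤ 2 ^ n ∧ x ≤ grid u n k ∧ grid u n k ≤ x + u / 2 ^ n := by
  have h2 : (0:ℝ) < 2 ^ n := by positivity
  refine ⟨⌈x * 2 ^ n / u⌉₊, ?_, ?_, ?_⟩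
  · rw [Nat.ceil_le, div_le_iff₀ hu]
    push_cast
    nlinarith
  · have h := Nat.le_ceil (x * 2 ^ n / u)
    unfold grid
    rw [le_div_iff₀ h2]
    calc x * 2 ^ n = x * 2 ^ n / u * u := by field_simp
    _ ≤ (⌈x * 2 ^ n / u⌉₊ : ℝ) * u := by gcongr
  · have h := Nat.ceil_lt_add_one (by positivity : (0:ℝ) ≤ x * 2 ^ n / u)
    unfold grid
    rw [div_le_iff₀ h2]
    have : (⌈x * 2 ^ n / u⌉₊ : ℝ) * u ≤ (x * 2 ^ n / u + 1) * u := by gcongr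
    calc (⌈x * 2 ^ n / u⌉₊ : ℝ) * u ≤ (x * 2 ^ n / u + 1) * u := this
    _ = x * 2 ^ n + u := by field_simp
    _ = (x + u / 2 ^ n) * 2 ^ n := by field_simp


/-! ### The discretized exit times -/

variable {M : ℝ → Ω → ℝ} {a b u : ℝ}

noncomputable def kappa (M : ℝ → Ω → ℝ) (a b u : ℝ) (n : ℕ) (ω : Ω) : ℝ :=
  if h : ∃ k, k ≤ 2 ^ n ∧ ω ∈ exitSet M a b (grid u n k) then grid u n (Nat.find h) else u

lemma kappa_nonneg (hu : 0 ≤ u) (n : ℕ) (ω : Ω) : 0 ≤ kappa M a b u n ω := by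
  unfold kappa; split_ifs with h
  · exact grid_nonneg hu _ _
  · exact hu

lemma kappa_le (hu : 0 ≤ u) (n : ℕ) (ω : Ω) : kappa M a b u n ω ≤ u := by
  unfold kappa; split_ifs with h
  · exact grid_le hu (Nat.find_spec h).1
  · exact le_rfl

lemma kappa_le_of_mem (hu : 0 ≤ u) {n k : ℕ} {ω : Ω} (hk : k ≤ 2 ^ n)
    (hmem : ω ∈ exitSet M a b (grid u n k)) : kappa M a b u n ω ≤ grid u n k := by
  have h : ∃ k, k ≤ 2 ^ n ∧ ω ∈ exitSet M a b (grid u n k) := ⟨k, hk, hmem⟩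
  unfold kappa
  rw [dif_pos h]
  exact grid_mono hu n (Nat.find_min' h ⟨hk, hmem⟩)

lemma kappa_cases (n : ℕ) (ω : Ω) :
    kappa M a b u n ω = u ∨ ω ∈ exitSet M a b (kappa M a b u n ω) := by
  unfold kappa; split_ifs with h
  · exact Or.inr (Nat.find_spec h).2
  · exact Or.inl rfl

lemma kappa_antitone (hu : 0 ≤ u) (ω : Ω) : Antitone fun n => kappa M a b u n ω := by
  refine antitone_nat_of_succ_le fun n => ?_
  by_cases h : ∃ k, k ≤ 2 ^ n ∧ ω ∈ exitSet M a b (grid u n k)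
  · have hval : kappa M a b u n ω = grid u n (Nat.find h) := by unfold kappa; rw [dif_pos h]
    rw [hval, ← grid_succ u n (Nat.find h)]
    refine kappa_le_of_mem hu ?_ ?_
    · calc 2 * Nat.find h ≤ 2 * 2 ^ n := by
            exact Nat.mul_le_mul_left 2 (Nat.find_spec h).1
      _ = 2 ^ (n + 1) := by ring
    · rw [grid_succ u n (Nat.find h)]
      exact (Nat.find_spec h).2
  · have hval : kappa M a b u n ω = u := by unfold kappa; rw [dif_neg h]
    rw [hval]
    exact kappa_le hu (n+1) ω

lemma isStoppingTime_kappa {ℱ : Filtration ℝ m0} (had : Adapted ℱ M)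
    (hMc : ∀ ω, Continuous fun s => M s ω) (hu : 0 ≤ u) (n : ℕ) :
    IsStoppingTime ℱ (fun ω => (kappa M a b u n ω : WithTop ℝ)) := by
  intro t
  simp only [WithTop.coe_le_coe]
  rcases le_or_gt u t with h | h
  · have : {ω | kappa M a b u n ω ≤ t} = univ :=
      eq_univ_of_forall fun ω => le_trans (kappa_le hu n ω) h
    rw [this]; exact MeasurableSet.univ
  · have heq : {ω | kappa M a b u n ω ≤ t} =
        ⋃ (k : ℕ) (_ : k ≤ 2 ^ n ∧ grid u n k ≤ t), exitSet M a b (grid u n k) := by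
      ext ω
      simp only [mem_setOf_eq, mem_iUnion]
      constructor
      · intro hκ
        by_cases hex : ∃ k, k ≤ 2 ^ n ∧ ω ∈ exitSet M a b (grid u n k)
        · have hval : kappa M a b u n ω = grid u n (Nat.find hex) := by
            unfold kappa; rw [dif_pos hex]
          exact ⟨Nat.find hex, ⟨(Nat.find_spec hex).1, hval ▸ hκ⟩, (Nat.find_spec hex).2⟩
        · have hval : kappa M a b u n ω = u := by unfold kappa; rw [dif_neg hex]
          rw [hval] at hκ
          exact absurd hκ (not_le.2 h)
      · rintro ⟨k, ⟨hk, hkt⟩, hmem⟩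
        exact le_trans (kappa_le_of_mem hu hk hmem) hkt
    rw [heq]
    refine MeasurableSet.iUnion fun k => MeasurableSet.iUnion fun hk => ?_
    exact ℱ.mono hk.2 _ (measurableSet_exitSet had hMc (grid_nonneg hu n k))

lemma countable_range_kappa (n : ℕ) : (Set.range (kappa M a b u n)).Countable := by
  refine Set.Countable.mono ?_ ((Set.countable_range (grid u n)).insert u)
  rintro x ⟨ω, rfl⟩
  unfold kappa
  split_ifs with h
  · exact Set.mem_insert_of_mem _ ⟨Nat.find h, rfl⟩
  · exact Set.mem_insert _ _

/-! ### The exit time as a limit, and its pathwise properties -/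

noncomputable def exitTime (M : ℝ → Ω → ℝ) (a b u : ℝ) (ω : Ω) : ℝ :=
  ⨅ n, kappa M a b u n ω

lemma tendsto_kappa (hu : 0 ≤ u) (ω : Ω) :
    Tendsto (fun n => kappa M a b u n ω) atTop (𝓝 (exitTime M a b u ω)) :=
  tendsto_atTop_ciInf (kappa_antitone hu ω)
    ⟨0, by rintro x ⟨n, rfl⟩; exact kappa_nonneg hu n ω⟩

/-- The pathwise exit set. -/
def pexit (M : ℝ → Ω → ℝ) (a b : ℝ) (ω : Ω) : Set ℝ :=
  {s | 0 ≤ s ∧ (a ≤ M s ω ∨ M s ω ≤ -b)}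

lemma isClosed_pexit (hMc : ∀ ω, Continuous fun s => M s ω) (ω : Ω) :
    IsClosed (pexit M a b ω) := by
  have h1 : IsClosed {s : ℝ | 0 ≤ s} := isClosed_le continuous_const continuous_id
  have h2 : IsClosed {s : ℝ | a ≤ M s ω} := isClosed_le continuous_const (hMc ω)
  have h3 : IsClosed {s : ℝ | M s ω ≤ -b} := isClosed_le (hMc ω) continuous_const
  exact h1.inter (h2.union h3)

lemma mem_exitSet_iff_pexit (ω : Ω) {t : ℝ} :
    ω ∈ exitSet M a b t ↔ ∃ s ∈ pexit M a b ω, s ≤ t := by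
  rw [mem_exitSet_iff]
  constructor
  · rintro ⟨s, h1, h2, h3⟩; exact ⟨s, ⟨h1, h3⟩, h2⟩
  · rintro ⟨s, ⟨h1, h3⟩, h2⟩; exact ⟨s, h1, h2, h3⟩

lemma exitTime_eq_u_of_no_exit (ω : Ω) (hu : 0 ≤ u)
    (hno : ∀ s ∈ pexit M a b ω, ¬ s ≤ u) : exitTime M a b u ω = u := by
  have h : ∀ n, kappa M a b u n ω = u := by
    intro n
    unfold kappa
    rw [dif_neg]
    rintro ⟨k, hk, hmem⟩
    obtain ⟨s, hs, hsle⟩ := (mem_exitSet_iff_pexit ω).1 hmem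
    exact hno s hs (le_trans hsle (grid_le hu hk))
  unfold exitTime
  simp only [h]
  exact ciInf_const

lemma exitTime_eq_sInf (hMc : ∀ ω, Continuous fun s => M s ω) (ω : Ω) (hu : 0 < u)
    (hne : (pexit M a b ω ∩ Icc 0 u).Nonempty) :
    exitTime M a b u ω = sInf (pexit M a b ω ∩ Icc 0 u) := by
  set ν := sInf (pexit M a b ω ∩ Icc 0 u) with hν
  have hbdd : BddBelow (pexit M a b ω ∩ Icc 0 u) := ⟨0, fun x hx => hx.2.1⟩
  have hνmem : ν ∈ pexit M a b ω ∩ Icc 0 u :=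
    ((isClosed_pexit hMc ω).inter isClosed_Icc).csInf_mem hne hbdd
  have hlow : ∀ n, ν ≤ kappa M a b u n ω := by
    intro n
    rcases kappa_cases (M := M) (a := a) (b := b) (u := u) n ω with h | h
    · rw [h]; exact hνmem.2.2
    · obtain ⟨s, hs, hsle⟩ := (mem_exitSet_iff_pexit ω).1 h
      refine le_trans (csInf_le hbdd ⟨hs, hs.1, le_trans hsle (kappa_le hu.le n ω)⟩) hsle
  have hupp : ∀ n, kappa M a b u n ω ≤ ν + u / 2 ^ n := by
    intro n
    obtain ⟨k, hk, hk1, hk2⟩ := exists_grid hu hνmem.2.1 hνmem.2.2 n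
    refine le_trans (kappa_le_of_mem hu.le hk ?_) hk2
    exact (mem_exitSet_iff_pexit ω).2 ⟨ν, hνmem.1, hk1⟩
  have hbb : BddBelow (Set.range fun m => kappa M a b u m ω) := by
    refine ⟨0, ?_⟩
    rintro x ⟨m, rfl⟩
    exact kappa_nonneg hu.le m ω
  have h1 : ν ≤ exitTime M a b u ω := le_ciInf hlow
  have h2 : exitTime M a b u ω ≤ ν := by
    have hti : Tendsto (fun n : ℕ => ν + u / 2 ^ n) atTop (𝓝 ν) := by
      have h2' : Tendsto (fun n : ℕ => u / 2 ^ n) atTop (𝓝 0) := by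
        simpa using tendsto_const_nhds.div_atTop
          (tendsto_pow_atTop_atTop_of_one_lt (by norm_num : (1:ℝ) < 2))
      simpa using tendsto_const_nhds.add h2'
    refine ge_of_tendsto hti (Eventually.of_forall fun n => ?_)
    exact le_trans (ciInf_le hbb n) (hupp n)
  exact le_antisymm h2 h1

lemma exitTime_stoppedValue_mem_Icc (hMc : ∀ ω, Continuous fun s => M s ω) (ω : Ω)
    (hM0 : M 0 ω = 0) (ha : 0 < a) (hb : 0 < b)
    (hu : 0 < u) : M (exitTime M a b u ω) ω ∈ Icc (-b) a := by
  by_cases hne : (pexit M a b ω ∩ Icc 0 u).Nonempty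
  · rw [exitTime_eq_sInf hMc ω hu hne]
    set ν := sInf (pexit M a b ω ∩ Icc 0 u) with hνdef
    have hbdd : BddBelow (pexit M a b ω ∩ Icc 0 u) := ⟨0, fun x hx => hx.2.1⟩
    have hνmem : ν ∈ pexit M a b ω ∩ Icc 0 u :=
      ((isClosed_pexit hMc ω).inter isClosed_Icc).csInf_mem hne hbdd
    rcases eq_or_lt_of_le hνmem.2.1 with h0 | h0
    · rw [← h0, hM0]
      exact ⟨by linarith, ha.le⟩
    · have hbefore : ∀ s, s ∈ Ioo 0 ν → -b < M s ω ∧ M s ω < a := by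
        intro s hs
        by_contra hcon
        have hsE : s ∈ pexit M a b ω ∩ Icc 0 u := by
          constructor
          · refine ⟨hs.1.le, ?_⟩
            rcases not_and_or.1 hcon with h | h
            · exact Or.inr (by linarith [not_lt.1 h])
            · exact Or.inl (not_lt.1 h)
          · exact ⟨hs.1.le, le_trans hs.2.le hνmem.2.2⟩
        exact absurd (csInf_le hbdd hsE) (not_le.2 hs.2)
      have htd : Tendsto (fun s => M s ω) (𝓝[<] ν) (𝓝 (M ν ω)) :=
        ((hMc ω).tendsto ν).mono_left nhdsWithin_le_nhds
      have hev : Ioo 0 ν ∈ 𝓝[<] ν := Ioo_mem_nhdsLT h0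
      constructor
      · refine ge_of_tendsto htd ?_
        filter_upwards [hev] with s hs
        exact (hbefore s hs).1.le
      · refine le_of_tendsto htd ?_
        filter_upwards [hev] with s hs
        exact (hbefore s hs).2.le
  · rw [exitTime_eq_u_of_no_exit ω hu.le (fun s hs hsu => hne ⟨s, hs, hs.1, hsu⟩)]
    by_contra hcon
    rw [mem_Icc, not_and_or] at hcon
    have hmem : u ∈ pexit M a b ω := by
      refine ⟨hu.le, ?_⟩
      rcases hcon with h | h
      · exact Or.inr (not_le.1 h).le
      · exact Or.inl (not_le.1 h).le
    exact hne ⟨u, hmem, hu.le, le_rfl⟩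

lemma exitTime_eq_of_hit (hMc : ∀ ω, Continuous fun s => M s ω) (ω : Ω)
    (hu : 0 < u) {σ : ℝ} (hσ0 : 0 ≤ σ) (hσu : σ ≤ u)
    (hσa : a ≤ M σ ω) (hlt : ∀ s, 0 ≤ s → s < σ → M s ω < a)
    (hgt : ∀ s, 0 ≤ s → s ≤ σ → -b < M s ω) : exitTime M a b u ω = σ := by
  have hσE : σ ∈ pexit M a b ω ∩ Icc 0 u := ⟨⟨hσ0, Or.inl hσa⟩, hσ0, hσu⟩
  rw [exitTime_eq_sInf hMc ω hu ⟨σ, hσE⟩]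
  have hbdd : BddBelow (pexit M a b ω ∩ Icc 0 u) := ⟨0, fun x hx => hx.2.1⟩
  have hνmem := ((isClosed_pexit hMc ω).inter isClosed_Icc).csInf_mem ⟨σ, hσE⟩ hbdd
  set ν := sInf (pexit M a b ω ∩ Icc 0 u)
  have hνσ : ν ≤ σ := csInf_le hbdd hσE
  rcases hνmem.1.2 with h | h
  · by_contra hne
    exact absurd (hlt ν hνmem.1.1 (lt_of_le_of_ne hνσ hne)) (not_lt.2 h)
  · exact absurd h (not_le.2 (hgt ν hνmem.1.1 hνσ))


/-! ### The probabilistic estimate -/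

theorem exit_prob {μ : Measure Ω} [IsProbabilityMeasure μ] (ℱ : Filtration ℝ m0)
    (M : ℝ → Ω → ℝ) (hM : Martingale M ℱ μ) (hMc : ∀ ω, Continuous fun t => M t ω)
    (hM0 : ∀ ω, M 0 ω = 0) {a b u : ℝ} (ha : 0 < a) (hb : 0 < b) (hu : 0 < u) :
    ∃ A : Set Ω, MeasurableSet A ∧ μ A ≤ ENNReal.ofReal (b / (a + b)) ∧
      ∀ᵐ ω ∂μ, (a ≤ M (exitTime M a b u ω) ω → ω ∈ A) := by
  have hst : ∀ n, IsStoppingTime ℱ (fun ω => (kappa M a b u n ω : WithTop ℝ)) :=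
    fun n => isStoppingTime_kappa (fun t => (hM.1 t).measurable) hMc hu.le n
  have hle : ∀ n, ∀ ω, (kappa M a b u n ω : WithTop ℝ) ≤ u := fun n ω =>
    WithTop.coe_le_coe.mpr (kappa_le hu.le n ω)
  have hOS : ∀ n, stoppedValue M (fun ω => (kappa M a b u n ω : WithTop ℝ)) =ᵐ[μ]
      μ[M u | ((hst n).measurableSpace)] := fun n =>
    hM.stoppedValue_ae_eq_condExp_of_le_const_of_countable_range (hst n) (hle n)
      (by
        have := (countable_range_kappa (M := M) (a := a) (b := b) (u := u) n).image
          (fun x : ℝ => (x : WithTop ℝ))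
        rwa [← Set.range_comp] at this)
  have hintn : ∀ n, Integrable (stoppedValue M (fun ω => (kappa M a b u n ω : WithTop ℝ))) μ :=
    fun n => integrable_condExp.congr (hOS n).symm
  have hEn : ∀ n, ∫ ω, stoppedValue M (fun ω => (kappa M a b u n ω : WithTop ℝ)) ω ∂μ = 0 := by
    intro n
    rw [integral_congr_ae (hOS n),
      integral_condExp ((hst n).measurableSpace_le_of_le (hle n))]
    have h0 : μ[M u | ℱ 0] =ᵐ[μ] M 0 := hM.condExp_ae_eq hu.le
    have h1 : ∫ ω, M u ω ∂μ = ∫ ω, M 0 ω ∂μ := by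
      rw [← integral_condExp (ℱ.le 0)]
      exact integral_congr_ae h0
    rw [h1]
    simp [hM0]
  set X : Ω → ℝ := fun ω => M (exitTime M a b u ω) ω with hX
  have htd : ∀ ω, Tendsto (fun n => stoppedValue M (fun ω => (kappa M a b u n ω : WithTop ℝ)) ω) atTop (𝓝 (X ω)) :=
    fun ω => ((hMc ω).tendsto (exitTime M a b u ω)).comp (tendsto_kappa hu.le ω)
  have hXmem : ∀ ω, X ω ∈ Icc (-b) a := fun ω =>
    exitTime_stoppedValue_mem_Icc hMc ω (hM0 ω) ha hb hu
  have hXaesm : AEStronglyMeasurable X μ :=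
    aestronglyMeasurable_of_tendsto_ae atTop (fun n => (hintn n).aestronglyMeasurable)
      (Eventually.of_forall htd)
  have hXint : Integrable X μ := by
    refine Integrable.mono' (integrable_const (max a b)) hXaesm ?_
    refine Eventually.of_forall fun ω => ?_
    rw [Real.norm_eq_abs, abs_le]
    constructor
    · linarith [(hXmem ω).1, le_max_right a b]
    · linarith [(hXmem ω).2, le_max_left a b]
  have hUI : UnifIntegrable (fun n => stoppedValue M (fun ω => (kappa M a b u n ω : WithTop ℝ))) 1 μ := by
    have h1 := (hM.integrable u).uniformIntegrable_condExp
      (fun n => (hst n).measurableSpace_le_of_le (hle n))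
    exact h1.2.1.ae_eq fun n => (hOS n).symm
  have hL1 : Tendsto (fun n => eLpNorm (stoppedValue M (fun ω => (kappa M a b u n ω : WithTop ℝ)) - X) 1 μ)
      atTop (𝓝 0) :=
    tendsto_Lp_finite_of_tendsto_ae le_rfl ENNReal.one_ne_top
      (fun n => (hintn n).aestronglyMeasurable) (memLp_one_iff_integrable.2 hXint) hUI
      (Eventually.of_forall htd)
  have hEX : ∫ ω, X ω ∂μ = 0 := by
    have h2 := tendsto_integral_of_L1' X hXint.aestronglyMeasurable (Eventually.of_forall hintn) hL1
    simp only [hEn] at h2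
    exact (tendsto_nhds_unique h2 tendsto_const_nhds)
  set Y : Ω → ℝ := fun ω => max (-b) (min a (hXaesm.mk X ω)) with hYdef
  have hYsm : Measurable Y :=
    measurable_const.max (measurable_const.min hXaesm.stronglyMeasurable_mk.measurable)
  have hXY : X =ᵐ[μ] Y := by
    filter_upwards [hXaesm.ae_eq_mk] with ω hω
    rw [hYdef]
    simp only [← hω]
    rw [min_eq_right (hXmem ω).2, max_eq_right (hXmem ω).1]
  have hYmem : ∀ ω, Y ω ∈ Icc (-b) a := by
    intro ω
    refine ⟨le_max_left _ _, ?_⟩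
    rw [hYdef]
    exact max_le (by linarith) (min_le_left _ _)
  have hYint : Integrable Y μ := hXint.congr hXY
  have hEY : ∫ ω, Y ω ∂μ = 0 := by rw [← integral_congr_ae hXY, hEX]
  refine ⟨{ω | a ≤ Y ω}, measurableSet_le measurable_const hYsm, ?_, ?_⟩
  · set A := {ω | a ≤ Y ω} with hA
    have hAm : MeasurableSet A := measurableSet_le measurable_const hYsm
    have h1 : a * (μ A).toReal ≤ ∫ ω in A, Y ω ∂μ :=
      by have := setIntegral_ge_of_const_le hAm (measure_ne_top μ A) (fun ω hω => hω)
           hYint.integrableOn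
         rwa [smul_eq_mul, mul_comm, measureReal_def] at this
    have h2 : (-b) * (μ Aᶜ).toReal ≤ ∫ ω in Aᶜ, Y ω ∂μ :=
      by have := setIntegral_ge_of_const_le hAm.compl (measure_ne_top μ Aᶜ)
           (fun ω _ => (hYmem ω).1) hYint.integrableOn
         rwa [smul_eq_mul, mul_comm, measureReal_def] at this
    have hsplit : ∫ ω in A, Y ω ∂μ + ∫ ω in Aᶜ, Y ω ∂μ = 0 := by
      rw [integral_add_compl hAm hYint, hEY]
    have hcompl : (μ Aᶜ).toReal = 1 - (μ A).toReal := by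
      rw [measure_compl hAm (measure_ne_top μ A), measure_univ,
        ENNReal.toReal_sub_of_le prob_le_one ENNReal.one_ne_top, ENNReal.toReal_one]
    have hfinal : (μ A).toReal ≤ b / (a + b) := by
      rw [le_div_iff₀ (by positivity)]
      nlinarith [h1, h2, hsplit, hcompl]
    calc μ A = ENNReal.ofReal (μ A).toReal := (ENNReal.ofReal_toReal (measure_ne_top μ A)).symm
    _ ≤ ENNReal.ofReal (b / (a + b)) := ENNReal.ofReal_le_ofReal hfinal
  · filter_upwards [hXY] with ω hω haX
    show a ≤ Y ω
    rw [← hω]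
    exact haX

end StochasticGronwallAux

set_option maxHeartbeats 1000000 in
/-- Gronwall-type lemma with a martingale: if `y ≥ 0` is continuous adapted, `M` is a
continuous martingale with `M 0 = 0`, `K ≥ 0` is locally integrable, and a.s.
`y_t ≤ M_t + ∫_0^t K_s y_s ds` for all `t ≥ 0`, then a.s. `y_t = 0` for all `t ≥ 0`. -/
theorem nonneg_dominated_by_martingale_eq_zero
    {Ω : Type*} {m0 : MeasurableSpace Ω} {μ : Measure Ω} [IsProbabilityMeasure μ]
    (ℱ : Filtration ℝ m0) (M y K : ℝ → Ω → ℝ)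
    (hM : Martingale M ℱ μ) (hMcont : ∀ ω, Continuous fun t => M t ω)
    (hM0 : ∀ ω, M 0 ω = 0)
    (hy : Adapted ℱ y) (hycont : ∀ ω, Continuous fun t => y t ω)
    (hynn : ∀ t ω, 0 ≤ t → 0 ≤ y t ω)
    (hKad : Adapted ℱ K) (hKnn : ∀ t ω, 0 ≤ K t ω)
    (hKint : ∀ ω, ∀ T ≥ (0:ℝ), IntervalIntegrable (fun s => K s ω) volume 0 T)
    (hineq : ∀ᵐ ω ∂μ, ∀ t ≥ (0:ℝ), y t ω ≤ M t ω + ∫ s in (0:ℝ)..t, K s ω * y s ω) :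
    ∀ᵐ ω ∂μ, ∀ t ≥ (0:ℝ), y t ω = 0 := by
  classical
  have key : ∀ T n j : ℕ, ∃ A : Set Ω, MeasurableSet A ∧
      μ A ≤ ENNReal.ofReal (1/((n:ℝ)+1)) ∧
      ∀ᵐ ω ∂μ, ((1/2:ℝ)^j ≤
        M (StochasticGronwallAux.exitTime M ((1/2:ℝ)^j) ((1/((n:ℝ)+1)) * (1/2:ℝ)^j)
          ((T:ℝ)+1) ω) ω → ω ∈ A) := by
    intro T n j
    have ha : (0:ℝ) < (1/2:ℝ)^j := by positivity
    have hc : (0:ℝ) < 1/((n:ℝ)+1) := by positivity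
    have hb : (0:ℝ) < (1/((n:ℝ)+1)) * (1/2:ℝ)^j := by positivity
    have hu : (0:ℝ) < (T:ℝ)+1 := by positivity
    obtain ⟨A, hA1, hA2, hA3⟩ :=
      StochasticGronwallAux.exit_prob ℱ M hM hMcont hM0 ha hb hu
    refine ⟨A, hA1, le_trans hA2 (ENNReal.ofReal_le_ofReal ?_), hA3⟩
    rw [div_le_iff₀ (by positivity)]
    nlinarith [ha, hc, mul_pos hc ha, mul_pos (mul_pos hc hc) ha]
  choose A hA1 hA2 hA3 using key
  have hae : ∀ᵐ ω ∂μ, (∀ t ≥ (0:ℝ), y t ω ≤ M t ω + ∫ s in (0:ℝ)..t, K s ω * y s ω) ∧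
      ∀ T n j : ℕ, ((1/2:ℝ)^j ≤
        M (StochasticGronwallAux.exitTime M ((1/2:ℝ)^j) ((1/((n:ℝ)+1)) * (1/2:ℝ)^j)
          ((T:ℝ)+1) ω) ω → ω ∈ A T n j) := by
    refine hineq.and ?_
    rw [ae_all_iff]; intro T; rw [ae_all_iff]; intro n; rw [ae_all_iff]; intro j
    exact hA3 T n j
  set bad : ℕ → Set Ω := fun T =>
    ⋃ (q : ℚ) (_ : 0 ≤ (q:ℝ) ∧ (q:ℝ) ≤ T), {ω | 0 < y q ω} with hbad_def
  -- the pathwise core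
  have hcore : ∀ T n : ℕ, ∀ᵐ ω ∂μ, ω ∈ bad T →
      ω ∈ ⋃ (j0 : ℕ), ⋂ (j : ℕ) (_ : j0 ≤ j), A T n j := by
    intro T n
    filter_upwards [hae] with ω hω hbadω
    obtain ⟨hiw, hA⟩ := hω
    set c : ℝ := 1/((n:ℝ)+1) with hc_def
    set u : ℝ := (T:ℝ)+1 with hu_def
    have hc : 0 < c := by rw [hc_def]; positivity
    have hu : 0 < u := by rw [hu_def]; positivity
    simp only [hbad_def, mem_iUnion, mem_setOf_eq] at hbadω
    obtain ⟨q, hq, hyq⟩ := hbadω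
    set S : Set ℝ := {t : ℝ | 0 ≤ t ∧ 0 < y t ω} with hS_def
    have hSne : S.Nonempty := ⟨q, hq.1, hyq⟩
    have hSbdd : BddBelow S := ⟨0, fun x hx => hx.1⟩
    set τ := sInf S with hτ_def
    have hτ0 : 0 ≤ τ := le_csInf hSne fun x hx => hx.1
    have hτT : τ ≤ T := le_trans (csInf_le hSbdd ⟨hq.1, hyq⟩) hq.2
    have hyzero : ∀ s, 0 ≤ s → s < τ → y s ω = 0 := by
      intro s hs0 hsτ
      refine le_antisymm ?_ (hynn s ω hs0)
      by_contra h
      push_neg at h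
      exact absurd (csInf_le hSbdd ⟨hs0, h⟩) (not_le.2 hsτ)
    have hyτ : y τ ω = 0 := by
      rcases eq_or_lt_of_le hτ0 with h0 | h0
      · have h1 := hiw 0 le_rfl
        rw [intervalIntegral.integral_same, hM0 ω] at h1
        rw [← h0]
        exact le_antisymm (by linarith) (hynn 0 ω le_rfl)
      · have htd : Tendsto (fun s => y s ω) (𝓝[<] τ) (𝓝 (y τ ω)) :=
          ((hycont ω).tendsto τ).mono_left nhdsWithin_le_nhds
        have h1 : Tendsto (fun s => y s ω) (𝓝[<] τ) (𝓝 0) := by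
          refine Tendsto.congr' ?_ tendsto_const_nhds
          filter_upwards [Ioo_mem_nhdsLT h0] with s hs
          exact (hyzero s hs.1.le hs.2).symm
        exact tendsto_nhds_unique htd h1
    have hyzero' : ∀ s, 0 ≤ s → s ≤ τ → y s ω = 0 := by
      intro s h1 h2
      rcases lt_or_eq_of_le h2 with h | h
      · exact hyzero s h1 h
      · rw [h]; exact hyτ
    have hKI : ∀ s t : ℝ, 0 ≤ s → s ≤ t →
        IntervalIntegrable (fun x => K x ω) volume s t := by
      intro s t hs hst
      refine (hKint ω t (le_trans hs hst)).mono_set ?_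
      rw [uIcc_of_le hst, uIcc_of_le (le_trans hs hst)]
      exact Icc_subset_Icc hs le_rfl
    have hKyI : ∀ s t : ℝ, 0 ≤ s → s ≤ t →
        IntervalIntegrable (fun x => K x ω * y x ω) volume s t :=
      fun s t hs hst => (hKI s t hs hst).mul_continuousOn (hycont ω).continuousOn
    have hR0 : ∀ s, 0 ≤ s → s ≤ τ → (∫ x in (0:ℝ)..s, K x ω * y x ω) = 0 := by
      intro s hs0 hsτ
      have heq : EqOn (fun x => K x ω * y x ω) (fun _ => (0:ℝ)) (uIcc 0 s) := by
        intro x hx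
        rw [uIcc_of_le hs0] at hx
        simp [hyzero' x hx.1 (le_trans hx.2 hsτ)]
      rw [intervalIntegral.integral_congr heq]
      simp
    have hMz : ∀ s, 0 ≤ s → s ≤ τ → 0 ≤ M s ω := by
      intro s h1 h2
      have h3 := hiw s h1
      rw [hR0 s h1 h2] at h3
      have h4 := hyzero' s h1 h2
      linarith
    have hRsplit : ∀ s, τ ≤ s → (∫ x in (0:ℝ)..s, K x ω * y x ω)
        = ∫ x in τ..s, K x ω * y x ω := by
      intro s hs
      rw [← intervalIntegral.integral_add_adjacent_intervals
        (hKyI 0 τ le_rfl hτ0) (hKyI τ s hτ0 hs), hR0 τ hτ0 le_rfl, zero_add]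
    -- choose the window endpoint w
    have hwget : ∃ w, τ < w ∧ w ≤ τ + 1 ∧ (∫ x in τ..w, K x ω) ≤ min (c/4) 4⁻¹ := by
      have hKτ1 : IntervalIntegrable (fun x => K x ω) volume τ (τ+1) :=
        hKI τ (τ+1) hτ0 (by linarith)
      have hcont : ContinuousOn (fun x => ∫ s in τ..x, K s ω) (uIcc τ (τ+1)) :=
        intervalIntegral.continuousOn_primitive_interval' hKτ1 left_mem_uIcc
      have hcwa := hcont τ left_mem_uIcc
      have htd : Tendsto (fun x => ∫ s in τ..x, K s ω) (𝓝[Ioc τ (τ+1)] τ) (𝓝 0) := by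
        have h0 : (∫ s in τ..τ, K s ω) = 0 := intervalIntegral.integral_same
        have h1 : Tendsto (fun x => ∫ s in τ..x, K s ω) (𝓝[uIcc τ (τ+1)] τ)
            (𝓝 (∫ s in τ..τ, K s ω)) := hcwa
        rw [h0] at h1
        refine h1.mono_left (nhdsWithin_mono τ ?_)
        rw [uIcc_of_le (by linarith : τ ≤ τ+1)]
        exact Ioc_subset_Icc_self
      have hne : (𝓝[Ioc τ (τ+1)] τ).NeBot := by
        rw [nhdsWithin_Ioc_eq_nhdsGT (by linarith : τ < τ+1)]
        infer_instance
      have hev1 : ∀ᶠ x in 𝓝[Ioc τ (τ+1)] τ, (∫ s in τ..x, K s ω) < min (c/4) 4⁻¹ :=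
        htd.eventually_lt_const (by positivity)
      obtain ⟨w, hw1, hw2⟩ := (hev1.and eventually_mem_nhdsWithin).exists
      exact ⟨w, hw2.1, hw2.2, hw1.le⟩
    obtain ⟨w, hτw, hw1, hαw⟩ := hwget
    have hwu : w ≤ u := by rw [hu_def]; linarith
    have hα_le : ∀ s, τ ≤ s → s ≤ w → (∫ x in τ..s, K x ω) ≤ min (c/4) 4⁻¹ := by
      intro s h1 h2
      have h3 : (∫ x in τ..s, K x ω) ≤ ∫ x in τ..w, K x ω := by
        rw [← intervalIntegral.integral_add_adjacent_intervals
          (hKI τ s hτ0 h1) (hKI s w (le_trans hτ0 h1) h2)]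
        have h4 : 0 ≤ ∫ x in s..w, K x ω :=
          intervalIntegral.integral_nonneg h2 fun x _ => hKnn x ω
        linarith
      linarith
    -- main interval bound
    have hstep : ∀ t, τ ≤ t → t ≤ w → ∃ V : ℝ, (∀ x ∈ Icc τ t, y x ω ≤ V) ∧ 0 ≤ V ∧
        (∀ x, τ ≤ x → x ≤ t → (∫ z in (0:ℝ)..x, K z ω * y z ω) ≤ min (c/4) 4⁻¹ * V) ∧
        (∀ B, (∀ x ∈ Icc τ t, M x ω ≤ B) → V ≤ B + min (c/4) 4⁻¹ * V) := by
      intro t h1 h2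
      obtain ⟨sV, hsV, hmax⟩ := isCompact_Icc.exists_isMaxOn (nonempty_Icc.mpr h1)
        ((hycont ω).continuousOn : ContinuousOn (fun s => y s ω) (Icc τ t))
      have hsV0 : 0 ≤ sV := le_trans hτ0 hsV.1
      have hV0 : 0 ≤ y sV ω := hynn sV ω hsV0
      have hRb : ∀ x, τ ≤ x → x ≤ t →
          (∫ z in (0:ℝ)..x, K z ω * y z ω) ≤ min (c/4) 4⁻¹ * y sV ω := by
        intro x hx1 hx2
        rw [hRsplit x hx1]
        calc (∫ z in τ..x, K z ω * y z ω) ≤ ∫ z in τ..x, K z ω * y sV ω := by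
              refine intervalIntegral.integral_mono_on hx1 (hKyI τ x hτ0 hx1)
                ((hKI τ x hτ0 hx1).mul_const _) ?_
              intro z hz
              exact mul_le_mul_of_nonneg_left (hmax ⟨hz.1, le_trans hz.2 hx2⟩) (hKnn z ω)
        _ = (∫ z in τ..x, K z ω) * y sV ω := intervalIntegral.integral_mul_const _ _
        _ ≤ min (c/4) 4⁻¹ * y sV ω :=
              mul_le_mul_of_nonneg_right (hα_le x hx1 (le_trans hx2 h2)) hV0
      refine ⟨y sV ω, fun x hx => hmax hx, hV0, hRb, ?_⟩
      intro B hB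
      have h3 := hiw sV hsV0
      have h4 := hRb sV hsV.1 hsV.2
      have h5 := hB sV hsV
      linarith
    -- the running maximum of M on [τ, w] is positive
    obtain ⟨sM, hsM, hmaxM⟩ := isCompact_Icc.exists_isMaxOn (nonempty_Icc.mpr hτw.le)
      ((hMcont ω).continuousOn : ContinuousOn (fun s => M s ω) (Icc τ w))
    have hW0 : 0 ≤ M sM ω := le_trans (hMz τ hτ0 le_rfl) (hmaxM ⟨le_rfl, hτw.le⟩)
    have hWpos : 0 < M sM ω := by
      obtain ⟨s₀, hs₀S, hs₀w⟩ : ∃ s₀ ∈ S, s₀ < w := exists_lt_of_csInf_lt hSne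
        (by rw [← hτ_def]; exact hτw)
      have hs₀τ : τ ≤ s₀ := csInf_le hSbdd hs₀S
      obtain ⟨V, hVmax, hV0, hRb, hViter⟩ := hstep w hτw.le le_rfl
      have h6 : V ≤ M sM ω + min (c/4) 4⁻¹ * V := hViter (M sM ω) fun x hx => hmaxM hx
      have h7 : 0 < V := lt_of_lt_of_le hs₀S.2 (hVmax s₀ ⟨hs₀τ, hs₀w.le⟩)
      have hε : min (c/4) 4⁻¹ * V ≤ 4⁻¹ * V :=
        mul_le_mul_of_nonneg_right (min_le_right _ _) hV0
      linarith
    obtain ⟨j0, hj0⟩ := exists_pow_lt_of_lt_one hWpos (by norm_num : (1/2:ℝ) < 1)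
    refine mem_iUnion.2 ⟨j0, ?_⟩
    simp only [mem_iInter]
    intro j hj
    have haj : (0:ℝ) < (1/2:ℝ)^j := by positivity
    have hajW : (1/2:ℝ)^j < M sM ω :=
      lt_of_le_of_lt (pow_le_pow_of_le_one (by norm_num) (by norm_num) hj) hj0
    set a : ℝ := (1/2:ℝ)^j with ha_def
    set b : ℝ := c * a with hb_def
    have hb0 : 0 < b := by rw [hb_def]; positivity
    set E : Set ℝ := {s : ℝ | 0 ≤ s ∧ a ≤ M s ω} with hE_def
    have hEne : E.Nonempty := ⟨sM, le_trans hτ0 hsM.1, hajW.le⟩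
    have hEclosed : IsClosed E := by
      rw [hE_def]
      exact (isClosed_le continuous_const continuous_id).inter
        (isClosed_le continuous_const (hMcont ω))
    have hEbdd : BddBelow E := ⟨0, fun x hx => hx.1⟩
    set σ := sInf E with hσ_def
    have hσmem : σ ∈ E := hEclosed.csInf_mem hEne hEbdd
    have hσ0 : 0 ≤ σ := hσmem.1
    have hσa : a ≤ M σ ω := hσmem.2
    have hσsM : σ ≤ sM := csInf_le hEbdd ⟨le_trans hτ0 hsM.1, hajW.le⟩
    have hσw : σ ≤ w := le_trans hσsM hsM.2
    have hσu : σ ≤ u := le_trans hσw hwu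
    have hbefore : ∀ s, 0 ≤ s → s < σ → M s ω < a := by
      intro s h1 h2
      by_contra h
      push_neg at h
      exact absurd (csInf_le hEbdd ⟨h1, h⟩) (not_le.2 h2)
    have hσpos : 0 < σ := by
      rcases eq_or_lt_of_le hσ0 with h0 | h0
      · exfalso
        rw [← h0, hM0 ω] at hσa
        linarith
      · exact h0
    have hMσle : M σ ω ≤ a := by
      have htd : Tendsto (fun s => M s ω) (𝓝[<] σ) (𝓝 (M σ ω)) :=
        ((hMcont ω).tendsto σ).mono_left nhdsWithin_le_nhds
      refine le_of_tendsto htd ?_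
      filter_upwards [Ioo_mem_nhdsLT hσpos] with s hs
      exact (hbefore s hs.1.le hs.2).le
    have hgt : ∀ s, 0 ≤ s → s ≤ σ → -b < M s ω := by
      intro s h1 h2
      rcases le_or_gt s τ with hsτ | hsτ
      · have h3 := hMz s h1 hsτ
        linarith
      · have hτσ : τ ≤ σ := le_trans hsτ.le h2
        obtain ⟨V, hVmax, hV0, hRb, hViter⟩ := hstep σ hτσ hσw
        have hMle : ∀ x ∈ Icc τ σ, M x ω ≤ a := by
          intro x hx
          rcases lt_or_eq_of_le hx.2 with h | h
          · exact (hbefore x (le_trans hτ0 hx.1) h).le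
          · rw [h]; exact hMσle
        have hVa : V ≤ a + min (c/4) 4⁻¹ * V := hViter a hMle
        have hε : min (c/4) 4⁻¹ * V ≤ 4⁻¹ * V :=
          mul_le_mul_of_nonneg_right (min_le_right _ _) hV0
        have hV43 : V ≤ (4/3) * a := by linarith
        have h3 := hiw s h1
        have h4 : (∫ z in (0:ℝ)..s, K z ω * y z ω) ≤ min (c/4) 4⁻¹ * V :=
          hRb s hsτ.le h2
        have h5 : min (c/4) 4⁻¹ * V ≤ (c/4) * V :=
          mul_le_mul_of_nonneg_right (min_le_left _ _) hV0
        have h6 : 0 ≤ y s ω := hynn s ω h1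
        have e2 : (c/4) * V ≤ (c/4) * ((4/3)*a) :=
          mul_le_mul_of_nonneg_left hV43 (by positivity)
        have e3 : (c/3) * a < c * a := by nlinarith [mul_pos hc haj]
        rw [hb_def]
        nlinarith
      -- end hgt
    have hfin := StochasticGronwallAux.exitTime_eq_of_hit (M := M) (a := a) (b := b)
      hMcont ω hu hσ0 hσu hσa hbefore hgt
    have hhit : a ≤ M (StochasticGronwallAux.exitTime M a b u ω) ω := by
      rw [hfin]; exact hσa
    exact hA T n j hhit
  -- measure of the bad sets is zero
  have hmeas0 : ∀ T : ℕ, μ (bad T) = 0 := by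
    intro T
    have hbound : ∀ n : ℕ, μ (bad T) ≤ ENNReal.ofReal (1/((n:ℝ)+1)) := by
      intro n
      have hmono : μ (bad T) ≤ μ (⋃ (j0 : ℕ), ⋂ (j : ℕ) (_ : j0 ≤ j), A T n j) :=
        measure_mono_ae (hcore T n)
      refine le_trans hmono ?_
      have hd : Directed (· ⊆ ·) (fun j0 : ℕ => ⋂ (j : ℕ) (_ : j0 ≤ j), A T n j) := by
        intro i j
        refine ⟨max i j, ?_, ?_⟩
        · intro ω hω
          simp only [mem_iInter] at hω ⊢
          intro k hk
          exact hω k (le_trans (le_max_left i j) hk)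
        · intro ω hω
          simp only [mem_iInter] at hω ⊢
          intro k hk
          exact hω k (le_trans (le_max_right i j) hk)
      rw [hd.measure_iUnion]
      refine iSup_le fun j0 => ?_
      refine le_trans (measure_mono ?_) (hA2 T n j0)
      exact biInter_subset_of_mem (le_refl j0)
    have hto : ∀ n : ℕ, (μ (bad T)).toReal ≤ 1/((n:ℝ)+1) := fun n =>
      ENNReal.toReal_le_of_le_ofReal (by positivity) (hbound n)
    have htr : (μ (bad T)).toReal ≤ 0 :=
      ge_of_tendsto' tendsto_one_div_add_atTop_nhds_zero_nat hto
    have h0 : (μ (bad T)).toReal = 0 := le_antisymm htr ENNReal.toReal_nonneg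
    rcases (ENNReal.toReal_eq_zero_iff _).1 h0 with h | h
    · exact h
    · exact absurd h (measure_ne_top μ _)
  have hUnull : μ (⋃ T : ℕ, bad T) = 0 := measure_iUnion_null fun T => hmeas0 T
  filter_upwards [measure_eq_zero_iff_ae_notMem.1 hUnull] with ω hω t ht
  refine le_antisymm ?_ (hynn t ω ht)
  by_contra h
  push_neg at h
  have hopen : IsOpen {s : ℝ | 0 < y s ω} := isOpen_lt continuous_const (hycont ω)
  obtain ⟨δ, hδ, hball⟩ := Metric.isOpen_iff.mp hopen t h
  rw [Real.ball_eq_Ioo] at hball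
  obtain ⟨q, hq1, hq2⟩ := exists_rat_btwn (lt_add_of_pos_right t hδ)
  have hq0 : 0 ≤ (q:ℝ) := le_trans ht hq1.le
  have hyq : 0 < y q ω := hball ⟨by linarith, hq2⟩
  obtain ⟨T, hT⟩ := exists_nat_ge (q:ℝ)
  refine hω (mem_iUnion.2 ⟨T, ?_⟩)
  simp only [hbad_def, mem_iUnion, mem_setOf_eq]
  exact ⟨q, ⟨hq0, hT⟩, hyq⟩
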